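/- Let X be a real locally convex Hausdorff topological vector space with topological dual X*, let (f_i)_{i∈I} be a family of proper lower semicontinuous convex functions f_i : X → ℝ∪{+∞}, and let x̄* ∈ X*. Assume that the robust sum f := Σ^R_{i∈I} f_i is proper and weakly inf-locally compact, and that the w*-closed conic hull of the convex hull of the set (⋃_{J∈𝓕(I)} Σ_{j∈J} dom f_j*) − x̄* is a linear subspace of X*. Then the set of optimal solutions of the problem (RP_{x̄*}): inf_{x∈X} (f(x) − ⟨x̄*,x⟩) is nonempty; more precisely, it is the sum of a nonempty convex weakly compact subset of X and a finite-dimensional linear subspace of X. -/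

import Mathlib

open scoped Pointwise Topology
open Set

noncomputable section

variable {X : Type*} [AddCommGroup X] [Module ℝ X] [TopologicalSpace X]
  [IsTopologicalAddGroup X] [ContinuousSMul ℝ X] [LocallyConvexSpace ℝ X] [T2Space X]
variable {ι : Type*}

/-- Fenchel conjugate of `f : X → ℝ ∪ {+∞}` (modeled as `EReal`-valued),
as a function on the topological dual (with its weak* topology). -/
def econj (f : X → EReal) (p : WeakDual ℝ X) : EReal := ⨆ x : X, (p x : EReal) - f x

/-- Effective domain. -/
def edom (f : X → EReal) : Set X := {x | f x ≠ ⊤}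

/-- Domain of the conjugate. -/
def edomStar (f : X → EReal) : Set (WeakDual ℝ X) := {p | econj f p ≠ ⊤}

/-- Epigraph of the conjugate. -/
def epiStar (f : X → EReal) : Set (WeakDual ℝ X × ℝ) := {q | econj f q.1 ≤ (q.2 : EReal)}

/-- Proper function: never `-∞`, not identically `+∞`. -/
def EProper (f : X → EReal) : Prop := (∀ x, f x ≠ ⊥) ∧ ∃ x, f x ≠ ⊤

/-- Convexity of an extended-real-valued function, via its epigraph. -/
def EConvexFn (f : X → EReal) : Prop := Convex ℝ {q : X × ℝ | f q.1 ≤ (q.2 : EReal)}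

/-- Robust sum of a family of functions. -/
def rsum (f : ι → X → EReal) (x : X) : EReal :=
  ⨆ (J : Finset ι) (_ : J.Nonempty), ∑ j ∈ J, f j x

/-- A set is weakly compact if it is compact in the weak topology `σ(X, X*)`. -/
def WCompact (K : Set X) : Prop := IsCompact (toWeakSpace ℝ X '' K)

/-- A subset of a topological space is locally compact if each of its points has
a compact neighborhood (within the set). -/
def IsLocCompactSet {Y : Type*} [TopologicalSpace Y] (S : Set Y) : Prop :=
  ∀ y ∈ S, ∃ K, K ⊆ S ∧ IsCompact K ∧ K ∈ nhdsWithin y S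

/-- `g` is weakly inf-locally compact if each sublevel set `[g ≤ r]` is
locally compact in the weak topology `σ(X, X*)`. -/
def WInfLocCompact (g : X → EReal) : Prop :=
  ∀ r : ℝ, IsLocCompactSet (toWeakSpace ℝ X '' {x | g x ≤ (r : EReal)})

/-- The cone generated by `B ∪ {0}`. -/
def coneHull {Z : Type*} [AddCommGroup Z] [Module ℝ Z] (B : Set Z) : Set Z :=
  {0} ∪ {z | ∃ c : ℝ, 0 < c ∧ ∃ b ∈ B, z = c • b}

/-- Optimal value of the primal problem `(RP_p)`. -/
def primalVal (f : X → EReal) (p : WeakDual ℝ X) : EReal := ⨅ x : X, f x - (p x : EReal)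

/-- Optimal solution set of the primal problem `(RP_p)`. -/
def primalSol (f : X → EReal) (p : WeakDual ℝ X) : Set X :=
  {x | f x - (p x : EReal) = primalVal f p}

/-- Feasibility for the dual problem `(RD_p)`. -/
def dualFeas (p : WeakDual ℝ X) (J : Finset ι) (xs : ι → WeakDual ℝ X) : Prop :=
  J.Nonempty ∧ ∑ j ∈ J, xs j = p

/-- Dual objective. -/
def dualObj (f : ι → X → EReal) (J : Finset ι) (xs : ι → WeakDual ℝ X) : EReal :=
  -∑ j ∈ J, econj (f j) (xs j)

/-- Optimal value of the dual problem `(RD_p)`. -/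
def dualVal (f : ι → X → EReal) (p : WeakDual ℝ X) : EReal :=
  ⨆ (J : Finset ι) (xs : ι → WeakDual ℝ X) (_ : dualFeas p J xs), dualObj f J xs

/-- Optimal solutions of the dual problem `(RD_p)`. -/
def dualSol (f : ι → X → EReal) (p : WeakDual ℝ X) (J : Finset ι)
    (xs : ι → WeakDual ℝ X) : Prop :=
  dualFeas p J xs ∧ dualObj f J xs = dualVal f p

/-- Subdifferential of `f` at `a`. -/
def esubdiff (f : X → EReal) (a : X) : Set (WeakDual ℝ X) :=
  {p | f a ≠ ⊥ ∧ f a ≠ ⊤ ∧ ∀ x, f a + ((p x - p a : ℝ) : EReal) ≤ f x}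

/-- `S_f(x)`: nonempty finite subsets realizing the robust sum at `x ∈ dom f`. -/
def Ssets (f : ι → X → EReal) (x : X) : Set (Finset ι) :=
  {J | J.Nonempty ∧ rsum f x ≠ ⊤ ∧ ∑ j ∈ J, f j x = rsum f x}

/-- `T_f(J)`, the inverse of `S_f`. -/
def Tset (f : ι → X → EReal) (J : Finset ι) : Set X := {x | J ∈ Ssets f x}

/-- `M_g(p) = argmin (g - ⟨p, ·⟩)` when `g*(p)` is finite, `∅` otherwise. -/
def Mmap (g : X → EReal) (p : WeakDual ℝ X) : Set X :=
  {x | econj g p ≠ ⊥ ∧ econj g p ≠ ⊤ ∧ ∀ y, g x - (p x : EReal) ≤ g y - (p y : EReal)}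

/-- Support function of a subset of the dual. -/
def suppFn (A : Set (WeakDual ℝ X)) (x : X) : EReal := ⨆ a ∈ A, ((a : WeakDual ℝ X) x : EReal)

/-- The function `φ` of (2.0). -/
def phiFun (f : ι → X → EReal) (p : WeakDual ℝ X) (q : WeakDual ℝ X) : EReal :=
  ⨅ (J : Finset ι) (xs : ι → WeakDual ℝ X) (_ : dualFeas (q + p) J xs),
    ∑ j ∈ J, econj (f j) (xs j)

/-- Subdifferential of a function on the dual, with subgradients in `X`. -/
def esubdiffStar (φ : WeakDual ℝ X → EReal) (q : WeakDual ℝ X) : Set X :=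
  {x | φ q ≠ ⊥ ∧ φ q ≠ ⊤ ∧ ∀ p : WeakDual ℝ X, φ q + ((p x - q x : ℝ) : EReal) ≤ φ p}

/-! ### Auxiliary material -/

section RSAux

open Filter

-- EReal helpers
lemma RS_exists_real_lt (a : EReal) (ha : a ≠ ⊥) : ∃ r : ℝ, (r : EReal) < a := by
  induction a with
  | bot => exact absurd rfl ha
  | coe a => exact ⟨a - 1, by exact_mod_cast sub_one_lt a⟩
  | top => exact ⟨0, by simp⟩

lemma RS_eq_of_forall_le_iff {a b : EReal} (h : ∀ r : ℝ, a ≤ (r : EReal) ↔ b ≤ (r : EReal)) :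
    a = b := by
  by_contra hne
  rcases lt_or_gt_of_ne hne with hlt | hlt
  · obtain ⟨r, h1, h2⟩ := EReal.exists_between_coe_real hlt
    exact absurd ((h r).1 h1.le) (not_le.2 h2)
  · obtain ⟨r, h1, h2⟩ := EReal.exists_between_coe_real hlt
    exact absurd ((h r).2 h1.le) (not_le.2 h2)

lemma RS_sub_coe_le_iff {a : EReal} {c r : ℝ} :
    a - (c : EReal) ≤ (r : EReal) ↔ a ≤ ((r + c : ℝ) : EReal) := by
  rw [EReal.coe_add]
  exact EReal.sub_le_iff_le_add (.inl (EReal.coe_ne_bot c)) (.inl (EReal.coe_ne_top c))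

lemma RS_sub_coe_ne_bot {a : EReal} (ha : a ≠ ⊥) (c : ℝ) : a - (c : EReal) ≠ ⊥ := by
  induction a with
  | bot => exact absurd rfl ha
  | coe a => rw [← EReal.coe_sub]; exact EReal.coe_ne_bot _
  | top => rw [EReal.top_sub_coe]; simp

lemma RS_sub_coe_ne_top {a : EReal} (ha : a ≠ ⊤) (c : ℝ) : a - (c : EReal) ≠ ⊤ := by
  induction a with
  | bot => simp
  | coe a => rw [← EReal.coe_sub]; exact EReal.coe_ne_top _
  | top => exact absurd rfl ha

lemma RS_coe_sum (J : Finset ι) (b : ι → ℝ) :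
    (∑ j ∈ J, ((b j : EReal))) = ((∑ j ∈ J, b j : ℝ) : EReal) := by
  classical
  induction J using Finset.cons_induction with
  | empty => simp
  | cons i J hi ih => rw [Finset.sum_cons, Finset.sum_cons, ih, ← EReal.coe_add]

lemma RS_sum_ne_bot {J : Finset ι} {a : ι → EReal} (h : ∀ j ∈ J, a j ≠ ⊥) :
    ∑ j ∈ J, a j ≠ ⊥ := by
  classical
  induction J using Finset.cons_induction with
  | empty => simp
  | cons i J hi ih =>
    rw [Finset.sum_cons]
    intro hc
    rcases EReal.add_eq_bot_iff.1 hc with hc | hc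
    · exact h i (Finset.mem_cons_self i J) hc
    · exact ih (fun j hj => h j (Finset.mem_cons_of_mem hj)) hc

lemma RS_sum_real {J : Finset ι} {a : ι → EReal} (hb : ∀ j ∈ J, a j ≠ ⊥)
    (ht : ∀ j ∈ J, a j ≠ ⊤) : ∑ j ∈ J, a j = ((∑ j ∈ J, (a j).toReal : ℝ) : EReal) := by
  classical
  rw [← RS_coe_sum]
  exact Finset.sum_congr rfl fun j hj => (EReal.coe_toReal (ht j hj) (hb j hj)).symm

lemma RS_exists_reals {J : Finset ι} {a : ι → EReal} (hb : ∀ j ∈ J, a j ≠ ⊥) {β : ℝ}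
    (hβ : (β : EReal) < ∑ j ∈ J, a j) :
    ∃ b : ι → ℝ, (∀ j ∈ J, (b j : EReal) < a j) ∧ β < ∑ j ∈ J, b j := by
  classical
  by_cases htop : ∃ j₀ ∈ J, a j₀ = ⊤
  · obtain ⟨j₀, hj₀J, hj₀⟩ := htop
    choose b' hb' using fun j (hj : j ∈ J) => RS_exists_real_lt (a j) (hb j hj)
    set b'' : ι → ℝ := fun j => if hj : j ∈ J then b' j hj else 0 with hb''
    refine ⟨Function.update b'' j₀ (β - ∑ j ∈ J.erase j₀, b'' j + 1), fun j hj => ?_, ?_⟩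
    · by_cases hjj : j = j₀
      · subst hjj; rw [Function.update_self, hj₀]; exact EReal.coe_lt_top _
      · rw [Function.update_of_ne hjj, hb'']; simp only [hj, dif_pos]; exact hb' j hj
    · rw [← Finset.add_sum_erase _ _ hj₀J, Function.update_self]
      have : ∑ j ∈ J.erase j₀, Function.update b'' j₀ (β - ∑ j ∈ J.erase j₀, b'' j + 1) j
          = ∑ j ∈ J.erase j₀, b'' j := by
        refine Finset.sum_congr rfl fun j hj => ?_
        exact Function.update_of_ne (Finset.ne_of_mem_erase hj) _ _
      rw [this]; linarith
  · push_neg at htop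
    have hsum := RS_sum_real hb htop
    rw [hsum, EReal.coe_lt_coe_iff] at hβ
    set δ : ℝ := (∑ j ∈ J, (a j).toReal - β) / (J.card + 1) with hδ
    have hδpos : 0 < δ := by
      apply div_pos (by linarith) (by positivity)
    refine ⟨fun j => (a j).toReal - δ, fun j hj => ?_, ?_⟩
    · rw [← EReal.coe_toReal (htop j hj) (hb j hj), EReal.coe_lt_coe_iff]
      dsimp only; linarith
    · rw [Finset.sum_sub_distrib, Finset.sum_const, nsmul_eq_mul]
      have h1 : (0:ℝ) < ∑ j ∈ J, (a j).toReal - β := by linarith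
      have hcard : (J.card : ℝ) * δ < ∑ j ∈ J, (a j).toReal - β := by
        rw [hδ, mul_div_assoc', div_lt_iff₀ (by positivity)]
        nlinarith
      linarith

end RSAux
section RSConj
set_option linter.unusedSectionVars false

lemma RS_le_econj (g : X → EReal) (q : WeakDual ℝ X) (x : X) :
    (q x : EReal) - g x ≤ econj g q := le_iSup (fun x => (q x : EReal) - g x) x

lemma RS_coe_sub_ne_bot (c : ℝ) {a : EReal} (ha : a ≠ ⊤) : (c : EReal) - a ≠ ⊥ := by
  induction a with
  | bot => simp [EReal.coe_sub_bot]
  | coe a => rw [← EReal.coe_sub]; exact EReal.coe_ne_bot _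
  | top => exact absurd rfl ha

lemma RS_econj_ne_bot (g : X → EReal) (hg : ∃ x, g x ≠ ⊤) (q : WeakDual ℝ X) :
    econj g q ≠ ⊥ := by
  obtain ⟨x₀, hx₀⟩ := hg
  intro hbot
  have h1 := RS_le_econj g q x₀
  rw [hbot, le_bot_iff] at h1
  exact RS_coe_sub_ne_bot (q x₀) hx₀ h1

lemma RS_econj_real (g : X → EReal) (hg : ∃ x, g x ≠ ⊤) {q : WeakDual ℝ X} {β : ℝ}
    (h : econj g q ≤ (β : EReal)) :
    econj g q = (((econj g q).toReal : ℝ) : EReal) ∧ (econj g q).toReal ≤ β := by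
  have hne : econj g q ≠ ⊤ := by
    intro hc; rw [hc] at h; exact EReal.coe_ne_top β (top_le_iff.1 h)
  have := EReal.coe_toReal hne (RS_econj_ne_bot g hg q)
  refine ⟨this.symm, ?_⟩
  rw [← this] at h
  exact_mod_cast h

lemma RS_epi_closed (g : X → EReal) (hl : LowerSemicontinuous g) :
    IsClosed {q : X × ℝ | g q.1 ≤ (q.2 : EReal)} := by
  rw [← isOpen_compl_iff, isOpen_iff_mem_nhds]
  rintro ⟨x, t⟩ h
  simp only [mem_compl_iff, mem_setOf_eq, not_le] at h
  obtain ⟨t', ht1, ht2⟩ := EReal.exists_between_coe_real h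
  have hx := hl x (t' : EReal) ht2
  rw [nhds_prod_eq]
  have h2 : {s : ℝ | s < t'} ∈ 𝓝 t := Iio_mem_nhds (by exact_mod_cast ht1)
  filter_upwards [Filter.prod_mem_prod hx h2] with z hz
  simp only [mem_compl_iff, mem_setOf_eq, not_le]
  exact lt_trans (by exact_mod_cast hz.2) hz.1

lemma RS_sep (g : X → EReal) (hl : LowerSemicontinuous g) (hc : EConvexFn g)
    {x : X} {α : ℝ} (h : ¬ g x ≤ (α : EReal)) :
    ∃ (q₀ : WeakDual ℝ X) (c u : ℝ), (∀ z (t : ℝ), g z ≤ (t : EReal) → q₀ z + c * t < u) ∧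
      u < q₀ x + c * α := by
  obtain ⟨φ, u, hsep, hxα⟩ := geometric_hahn_banach_closed_point
    (s := {q : X × ℝ | g q.1 ≤ (q.2 : EReal)}) hc (RS_epi_closed g hl)
    (show ((x, α) : X × ℝ) ∉ {q : X × ℝ | g q.1 ≤ (q.2 : EReal)} from fun hmem => h hmem)
  have hdec : ∀ (z : X) (t : ℝ), φ (z, t) = φ (z, 0) + t * φ (0, 1) := by
    intro z t
    have h1 : (z, t) = (z, (0:ℝ)) + (t : ℝ) • ((0 : X), (1:ℝ)) := by
      simp [Prod.ext_iff]
    rw [h1, map_add, map_smul, smul_eq_mul]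
  refine ⟨φ.comp (ContinuousLinearMap.inl ℝ X ℝ), φ (0, 1), u, fun z t hzt => ?_, ?_⟩
  · have h1 := hsep (z, t) hzt
    rw [hdec z t] at h1
    rw [mul_comm]; exact h1
  · have h1 := hxα
    rw [hdec x α] at h1
    rw [mul_comm]; exact h1

lemma RS_c_nonpos {g : X → EReal} (hp : EProper g) {q₀ : WeakDual ℝ X} {c u : ℝ}
    (hsep : ∀ z (t : ℝ), g z ≤ (t : EReal) → q₀ z + c * t < u) : c ≤ 0 := by
  by_contra hc0
  push_neg at hc0
  obtain ⟨x₀, hx₀⟩ := hp.2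
  set t₀ : ℝ := (g x₀).toReal with ht₀
  have hx₀' : g x₀ = (t₀ : EReal) := (EReal.coe_toReal hx₀ (hp.1 x₀)).symm
  obtain ⟨n, hn⟩ := exists_nat_gt ((u - q₀ x₀ - c * t₀) / c)
  have h1 : g x₀ ≤ ((t₀ + n : ℝ) : EReal) := by
    rw [hx₀']; exact_mod_cast le_add_of_nonneg_right n.cast_nonneg
  have h2 := hsep x₀ (t₀ + n) h1
  rw [div_lt_iff₀ hc0] at hn
  nlinarith

lemma RS_conj_bound (g : X → EReal) (hgbot : ∀ z, g z ≠ ⊥) {q₀ : WeakDual ℝ X} {c u : ℝ}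
    (hc : c < 0) (hsep : ∀ z (t : ℝ), g z ≤ (t : EReal) → q₀ z + c * t < u) :
    econj g ((-c)⁻¹ • q₀) ≤ (((-c)⁻¹ * u : ℝ) : EReal) := by
  refine iSup_le fun z => ?_
  by_cases hz : g z = ⊤
  · rw [hz, EReal.sub_top]; exact bot_le
  · have hz' : g z = (((g z).toReal : ℝ) : EReal) := (EReal.coe_toReal hz (hgbot z)).symm
    set t : ℝ := (g z).toReal
    have h2 := hsep z t (le_of_eq hz')
    have happ : ((-c)⁻¹ • q₀) z = (-c)⁻¹ * q₀ z := rfl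
    rw [hz', happ, ← EReal.coe_sub, EReal.coe_le_coe_iff]
    have hcpos : 0 < -c := neg_pos.2 hc
    have h3 := mul_lt_mul_of_pos_left h2 (inv_pos.2 hcpos)
    have hinv : (-c)⁻¹ * c = -1 := by rw [inv_neg, neg_mul, inv_mul_cancel₀ hc.ne]
    have h4 : (-c)⁻¹ * (q₀ z + c * t) = (-c)⁻¹ * q₀ z + ((-c)⁻¹ * c) * t := by ring
    rw [h4, hinv] at h3
    linarith

lemma RS_fm0 (g : X → EReal) (hp : EProper g) (hl : LowerSemicontinuous g) (hc : EConvexFn g) :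
    ∃ (q : WeakDual ℝ X) (β : ℝ), econj g q ≤ (β : EReal) := by
  obtain ⟨x₀, hx₀⟩ := hp.2
  set t₀ : ℝ := (g x₀).toReal with ht₀
  have hx₀' : g x₀ = (t₀ : EReal) := (EReal.coe_toReal hx₀ (hp.1 x₀)).symm
  have hnot : ¬ g x₀ ≤ ((t₀ - 1 : ℝ) : EReal) := by
    rw [hx₀']
    exact_mod_cast not_le.2 (sub_one_lt t₀)
  obtain ⟨q₀, c, u, hsep, hgt⟩ := RS_sep g hl hc hnot
  have hcle : c ≤ 0 := RS_c_nonpos hp hsep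
  have hcne : c ≠ 0 := by
    rintro rfl
    have h1 := hsep x₀ t₀ (le_of_eq hx₀')
    simp only [mul_zero, zero_mul, add_zero] at h1 hgt
    linarith
  exact ⟨_, _, RS_conj_bound g hp.1 (lt_of_le_of_ne hcle hcne) hsep⟩

lemma RS_fm (g : X → EReal) (hp : EProper g) (hl : LowerSemicontinuous g) (hc : EConvexFn g)
    (x : X) (α : ℝ) (hα : (α : EReal) < g x) :
    ∃ (q : WeakDual ℝ X) (γ : ℝ), econj g q = (γ : EReal) ∧ α < q x - γ := by
  have hnot : ¬ g x ≤ (α : EReal) := not_le.2 hα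
  obtain ⟨q₀, c, u, hsep, hgt⟩ := RS_sep g hl hc hnot
  have hcle : c ≤ 0 := RS_c_nonpos hp hsep
  rcases lt_or_eq_of_le hcle with hclt | hceq
  · -- c < 0
    set q : WeakDual ℝ X := (-c)⁻¹ • q₀ with hq
    set β : ℝ := (-c)⁻¹ * u with hβ
    have hbound : econj g q ≤ (β : EReal) := RS_conj_bound g hp.1 hclt hsep
    obtain ⟨heq, hle⟩ := RS_econj_real g hp.2 hbound
    refine ⟨q, (econj g q).toReal, heq, ?_⟩
    have happ : q x = (-c)⁻¹ * q₀ x := rfl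
    have hcpos : 0 < -c := neg_pos.2 hclt
    have h3 := mul_lt_mul_of_pos_left hgt (inv_pos.2 hcpos)
    have hinv : (-c)⁻¹ * c = -1 := by rw [inv_neg, neg_mul, inv_mul_cancel₀ hclt.ne]
    have h4 : (-c)⁻¹ * (q₀ x + c * α) = (-c)⁻¹ * q₀ x + ((-c)⁻¹ * c) * α := by ring
    rw [h4, hinv] at h3
    have : α < q x - β := by rw [happ, hβ]; linarith
    linarith
  · -- c = 0
    subst hceq
    have hsep' : ∀ z (t : ℝ), g z ≤ (t : EReal) → q₀ z < u := by
      intro z t hzt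
      have := hsep z t hzt
      simpa using this
    have hgt' : u < q₀ x := by simpa using hgt
    obtain ⟨q₁, β₁, hq₁⟩ := RS_fm0 g hp hl hc
    set s : ℝ := max 0 ((α + β₁ - q₁ x + 1) / (q₀ x - u)) with hs
    have hs0 : 0 ≤ s := le_max_left _ _
    have hq0xu : 0 < q₀ x - u := by linarith
    set q : WeakDual ℝ X := q₁ + s • q₀ with hq
    set β : ℝ := β₁ + s * u with hβ
    have hbound : econj g q ≤ (β : EReal) := by
      refine iSup_le fun z => ?_
      by_cases hz : g z = ⊤
      · rw [hz, EReal.sub_top]; exact bot_le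
      · have hz' : g z = (((g z).toReal : ℝ) : EReal) := (EReal.coe_toReal hz (hp.1 z)).symm
        set t : ℝ := (g z).toReal
        have h1 : (q₁ z : EReal) - g z ≤ (β₁ : EReal) := le_trans (RS_le_econj g q₁ z) hq₁
        rw [hz', ← EReal.coe_sub, EReal.coe_le_coe_iff] at h1
        have h2 : q₀ z < u := hsep' z t (le_of_eq hz')
        have happ : q z = q₁ z + s * q₀ z := rfl
        rw [hz', happ, ← EReal.coe_sub, EReal.coe_le_coe_iff, hβ]
        nlinarith [mul_le_mul_of_nonneg_left h2.le hs0]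
    obtain ⟨heq, hle⟩ := RS_econj_real g hp.2 hbound
    refine ⟨q, (econj g q).toReal, heq, ?_⟩
    have happ : q x = q₁ x + s * q₀ x := rfl
    have hρ : (α + β₁ - q₁ x + 1) / (q₀ x - u) * (q₀ x - u) = α + β₁ - q₁ x + 1 :=
      div_mul_cancel₀ _ (ne_of_gt hq0xu)
    have hsρ : (α + β₁ - q₁ x + 1) / (q₀ x - u) ≤ s := le_max_right _ _
    have h4 : α + β₁ - q₁ x + 1 ≤ s * (q₀ x - u) := by
      calc α + β₁ - q₁ x + 1 = (α + β₁ - q₁ x + 1) / (q₀ x - u) * (q₀ x - u) := hρ.symm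
        _ ≤ s * (q₀ x - u) := mul_le_mul_of_nonneg_right hsρ hq0xu.le
    have : α < q x - β := by rw [happ, hβ]; nlinarith
    linarith

lemma RS_edomStar_real {g : X → EReal} (hg : ∃ x, g x ≠ ⊤) {q : WeakDual ℝ X}
    (hq : q ∈ edomStar g) : econj g q = (((econj g q).toReal : ℝ) : EReal) :=
  (EReal.coe_toReal hq (RS_econj_ne_bot g hg q)).symm

end RSConj
section RSSum
set_option linter.unusedSectionVars false

/-- The union of all finite sums of conjugate domains. -/
def RS_D (f : ι → X → EReal) : Set (WeakDual ℝ X) :=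
  ⋃ J ∈ {J : Finset ι | J.Nonempty}, ∑ j ∈ J, edomStar (f j)

lemma RS_mem_D {f : ι → X → EReal} {q : WeakDual ℝ X} :
    q ∈ RS_D f ↔ ∃ J : Finset ι, J.Nonempty ∧ q ∈ ∑ j ∈ J, edomStar (f j) := by
  simp [RS_D, Set.mem_iUnion]

lemma RS_rsum_ge {f : ι → X → EReal} {J : Finset ι} (hJ : J.Nonempty) (x : X) :
    ∑ j ∈ J, f j x ≤ rsum f x :=
  le_iSup₂_of_le J hJ le_rfl

lemma RS_sum_eq_top {J : Finset ι} {a : ι → EReal} {j₀ : ι} (hj₀ : j₀ ∈ J) (ht : a j₀ = ⊤)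
    (hb : ∀ j ∈ J, a j ≠ ⊥) : ∑ j ∈ J, a j = ⊤ := by
  classical
  rw [← Finset.add_sum_erase _ _ hj₀, ht]
  rw [EReal.top_add_of_ne_bot]
  exact RS_sum_ne_bot fun j hj => hb j (Finset.mem_of_mem_erase hj)

lemma RS_sum_apply {J : Finset ι} (qs : ι → WeakDual ℝ X) (x : X) :
    (∑ j ∈ J, qs j) x = ∑ j ∈ J, qs j x := by
  classical
  induction J using Finset.cons_induction with
  | empty => rfl
  | cons i J hi ih => rw [Finset.sum_cons, Finset.sum_cons, ← ih]; rfl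

lemma RS_conj_sum_le (f : ι → X → EReal) (hfb : ∀ j x, f j x ≠ ⊥) {J : Finset ι}
    (hJ : J.Nonempty) (qs : ι → WeakDual ℝ X) (hqs : ∀ j ∈ J, qs j ∈ edomStar (f j)) :
    econj (rsum f) (∑ j ∈ J, qs j) ≤
      ((∑ j ∈ J, (econj (f j) (qs j)).toReal : ℝ) : EReal) := by
  refine iSup_le fun x => ?_
  by_cases hx : rsum f x = ⊤
  · rw [hx, EReal.sub_top]; exact bot_le
  have hxb : rsum f x ≠ ⊥ := by
    intro hc
    have h1 := RS_rsum_ge hJ x (f := f)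
    rw [hc, le_bot_iff] at h1
    exact RS_sum_ne_bot (fun j hj => hfb j x) h1
  set ρ : ℝ := (rsum f x).toReal with hρ
  have hxρ : rsum f x = (ρ : EReal) := (EReal.coe_toReal hx hxb).symm
  have hsum_le : ∑ j ∈ J, f j x ≤ (ρ : EReal) := hxρ ▸ RS_rsum_ge hJ x
  have htj : ∀ j ∈ J, f j x ≠ ⊤ := by
    intro j hj hc
    rw [RS_sum_eq_top hj hc (fun j _ => hfb j x)] at hsum_le
    exact (EReal.coe_ne_top ρ) (top_le_iff.1 hsum_le)
  have hsum_real := RS_sum_real (a := fun j => f j x) (fun j hj => hfb j x) htj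
  rw [hsum_real, EReal.coe_le_coe_iff] at hsum_le
  have happ : (∑ j ∈ J, qs j) x = ∑ j ∈ J, qs j x := RS_sum_apply qs x
  have hterm : ∀ j ∈ J, qs j x - (f j x).toReal ≤ (econj (f j) (qs j)).toReal := by
    intro j hj
    have h1 := RS_le_econj (f j) (qs j) x
    have h2 := RS_edomStar_real ⟨x, htj j hj⟩ (hqs j hj)
    have h3 : f j x = (((f j x).toReal : ℝ) : EReal) :=
      (EReal.coe_toReal (htj j hj) (hfb j x)).symm
    rw [h2, h3, ← EReal.coe_sub, EReal.coe_le_coe_iff] at h1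
    exact h1
  rw [hxρ, happ, ← EReal.coe_sub, EReal.coe_le_coe_iff]
  have h3 : ∑ j ∈ J, (qs j x - (f j x).toReal) ≤ ∑ j ∈ J, (econj (f j) (qs j)).toReal :=
    Finset.sum_le_sum hterm
  rw [Finset.sum_sub_distrib] at h3
  linarith

lemma RS_mem_D_conj {f : ι → X → EReal} (hfb : ∀ j x, f j x ≠ ⊥) (hft : ∃ x, rsum f x ≠ ⊤)
    {q : WeakDual ℝ X} (hq : q ∈ RS_D f) :
    econj (rsum f) q = (((econj (rsum f) q).toReal : ℝ) : EReal) := by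
  obtain ⟨J, hJ, hmem⟩ := RS_mem_D.1 hq
  obtain ⟨qs, hqs, hqsum⟩ := (Set.mem_finset_sum J _ q).1 hmem
  have h1 := RS_conj_sum_le f hfb hJ qs (fun j hj => hqs hj)
  rw [hqsum] at h1
  exact (RS_econj_real (rsum f) hft h1).1

lemma RS_rsum_le (f : ι → X → EReal) (hproper : ∀ i, EProper (f i))
    (hlsc : ∀ i, LowerSemicontinuous (f i)) (hconv : ∀ i, EConvexFn (f i))
    (hft : ∃ x, rsum f x ≠ ⊤) (x : X) (β : ℝ)
    (h : ∀ q ∈ RS_D f, (q x : ℝ) - (econj (rsum f) q).toReal ≤ β) :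
    rsum f x ≤ (β : EReal) := by
  classical
  refine iSup_le fun J => iSup_le fun hJ => ?_
  by_contra hcon
  push_neg at hcon
  obtain ⟨b, hb1, hb2⟩ := RS_exists_reals (fun j hj => (hproper j).1 x) hcon
  have hfm : ∀ j ∈ J, ∃ (q : WeakDual ℝ X) (γ : ℝ),
      econj (f j) q = (γ : EReal) ∧ b j < q x - γ :=
    fun j hj => RS_fm (f j) (hproper j) (hlsc j) (hconv j) x (b j) (hb1 j hj)
  choose qs γs hq1 hq2 using fun j (hj : j ∈ J) => hfm j hj
  set qs' : ι → WeakDual ℝ X := fun j => if hj : j ∈ J then qs j hj else 0 with hqs'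
  set γ' : ι → ℝ := fun j => if hj : j ∈ J then γs j hj else 0 with hγ'
  have hdom : ∀ j ∈ J, qs' j ∈ edomStar (f j) := by
    intro j hj
    simp only [hqs', dif_pos hj]
    rw [edomStar, mem_setOf_eq, hq1 j hj]
    exact EReal.coe_ne_top _
  set q : WeakDual ℝ X := ∑ j ∈ J, qs' j with hqdef
  have hqD : q ∈ RS_D f := by
    rw [RS_mem_D]
    exact ⟨J, hJ, (Set.mem_finset_sum J _ q).2 ⟨qs', fun hj => hdom _ hj, rfl⟩⟩
  have hconjle := RS_conj_sum_le f (fun j x => (hproper j).1 x) hJ qs' hdom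
  have hconjreal := RS_mem_D_conj (fun j x => (hproper j).1 x) hft hqD
  have hcd : (econj (rsum f) q).toReal ≤ ∑ j ∈ J, (econj (f j) (qs' j)).toReal := by
    rw [hconjreal] at hconjle
    exact_mod_cast hconjle
  have happ : q x = ∑ j ∈ J, qs' j x := RS_sum_apply qs' x
  have hterm : ∀ j ∈ J, b j < qs' j x - γ' j := by
    intro j hj
    simp only [hqs', hγ', dif_pos hj]
    exact hq2 j hj
  have hγeq : ∀ j ∈ J, (econj (f j) (qs' j)).toReal = γ' j := by
    intro j hj
    simp only [hqs', hγ', dif_pos hj]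
    rw [hq1 j hj, EReal.toReal_coe]
  have hq := h q hqD
  have hsum : ∑ j ∈ J, b j < ∑ j ∈ J, (qs' j x - γ' j) :=
    Finset.sum_lt_sum_of_nonempty hJ hterm
  rw [Finset.sum_sub_distrib] at hsum
  have h5 : ∑ j ∈ J, (econj (f j) (qs' j)).toReal = ∑ j ∈ J, γ' j :=
    Finset.sum_congr rfl hγeq
  rw [h5] at hcd
  rw [happ] at hq
  linarith

lemma RS_char (f : ι → X → EReal) (p : WeakDual ℝ X) (hproper : ∀ i, EProper (f i))
    (hlsc : ∀ i, LowerSemicontinuous (f i)) (hconv : ∀ i, EConvexFn (f i))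
    (hfproper : EProper (rsum f)) (r : ℝ) (x : X) :
    rsum f x - (p x : EReal) ≤ (r : EReal) ↔
      ∀ q ∈ RS_D f, q x - p x ≤ r + (econj (rsum f) q).toReal := by
  rw [RS_sub_coe_le_iff]
  constructor
  · intro hle q hq
    have h1 := RS_le_econj (rsum f) q x
    have h2 := RS_mem_D_conj (fun j x => (hproper j).1 x) hfproper.2 hq
    have hxt : rsum f x ≠ ⊤ := fun hc => by
      rw [hc] at hle; exact (EReal.coe_ne_top _) (top_le_iff.1 hle)
    have hxρ : rsum f x = (((rsum f x).toReal : ℝ) : EReal) :=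
      (EReal.coe_toReal hxt (hfproper.1 x)).symm
    rw [hxρ, EReal.coe_le_coe_iff] at hle
    rw [h2, hxρ, ← EReal.coe_sub, EReal.coe_le_coe_iff] at h1
    linarith
  · intro hall
    exact RS_rsum_le f hproper hlsc hconv hfproper.2 x (r + p x) fun q hq => by
      have := hall q hq; linarith

end RSSum
section RSGeo
set_option linter.unusedSectionVars false
open Filter Topology

instance RS_instContinuousSMulWeak : ContinuousSMul ℝ (WeakSpace ℝ X) :=
  inferInstanceAs (ContinuousSMul ℝ (WeakBilin (topDualPairing ℝ X).flip))

instance RS_instLocallyConvexWeak : LocallyConvexSpace ℝ (WeakSpace ℝ X) :=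
  inferInstanceAs (LocallyConvexSpace ℝ (WeakBilin (topDualPairing ℝ X).flip))

lemma RS_ev_continuous (q : WeakDual ℝ X) :
    Continuous fun z : WeakSpace ℝ X => q ((toWeakSpace ℝ X).symm z) :=
  WeakBilin.eval_continuous (topDualPairing ℝ X).flip q

lemma RS_mem_tau {S : Set X} {z : WeakSpace ℝ X} :
    z ∈ toWeakSpace ℝ X '' S ↔ (toWeakSpace ℝ X).symm z ∈ S := by
  constructor
  · rintro ⟨x, hx, rfl⟩; rwa [LinearEquiv.symm_apply_apply]
  · intro h; exact ⟨_, h, LinearEquiv.apply_symm_apply _ _⟩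

lemma RS_weak_t2 : T2Space (WeakSpace ℝ X) := by
  have hsep : SeparatingDual ℝ (WeakSpace ℝ X) := by
    constructor
    intro z hz
    have hz' : (toWeakSpace ℝ X).symm z ≠ 0 := fun hc => hz (by
      have := congrArg (toWeakSpace ℝ X) hc
      rwa [LinearEquiv.apply_symm_apply, map_zero] at this)
    obtain ⟨φ, hφ⟩ := SeparatingDual.exists_ne_zero (R := ℝ) hz'
    exact ⟨⟨φ.toLinearMap.comp ((toWeakSpace ℝ X).symm : WeakSpace ℝ X →ₗ[ℝ] X),
      RS_ev_continuous φ⟩, hφ⟩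
  exact hsep.t2Space

lemma RS_isLocCompactSet_closed_subset {Y : Type*} [TopologicalSpace Y] {S A : Set Y}
    (hS : IsLocCompactSet S) (hA : IsClosed A) (hAS : A ⊆ S) : IsLocCompactSet A := by
  intro y hy
  obtain ⟨K, hKS, hKc, hKn⟩ := hS y (hAS hy)
  refine ⟨K ∩ A, inter_subset_right, hKc.inter_right hA, ?_⟩
  exact Filter.inter_mem (nhdsWithin_mono y hAS hKn) self_mem_nhdsWithin

lemma RS_isLocCompactSet_image {Y Z : Type*} [TopologicalSpace Y] [TopologicalSpace Z]
    (h : Y ≃ₜ Z) {S : Set Y} (hS : IsLocCompactSet S) : IsLocCompactSet (h '' S) := by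
  rintro _ ⟨y, hy, rfl⟩
  obtain ⟨K, hKS, hKc, hKn⟩ := hS y hy
  refine ⟨h '' K, Set.image_mono hKS, hKc.image h.continuous, ?_⟩
  rw [mem_nhdsWithin_iff_exists_mem_nhds_inter] at hKn ⊢
  obtain ⟨U, hU, hUK⟩ := hKn
  refine ⟨h '' U, h.isOpenMap.image_mem_nhds hU, ?_⟩
  rintro z ⟨⟨u, hu, rfl⟩, ⟨w, hw, hweq⟩⟩
  have : u = w := h.injective hweq.symm
  subst this
  exact ⟨u, hUK ⟨hu, hw⟩, rfl⟩

lemma RS_weak_nhds_cylinder {U : Set (WeakSpace ℝ X)} (hU : U ∈ 𝓝 (0 : WeakSpace ℝ X)) :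
    ∃ (s : Finset (WeakDual ℝ X)) (ε : ℝ), 0 < ε ∧
      {z : WeakSpace ℝ X | ∀ w ∈ s, |w ((toWeakSpace ℝ X).symm z)| < ε} ⊆ U := by
  classical
  replace hU := Filter.mem_comap.1 <| (nhds_induced (fun (z : WeakBilin (topDualPairing ℝ X).flip) (w : WeakDual ℝ X) =>
    (topDualPairing ℝ X).flip z w) (0 : WeakBilin (topDualPairing ℝ X).flip)).ge hU
  obtain ⟨t, ht, htU⟩ := hU
  rw [nhds_pi, Filter.mem_pi] at ht
  obtain ⟨I, hIfin, ti, hti, hsub⟩ := ht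
  set sF : Finset (WeakDual ℝ X) := hIfin.toFinset with hsF
  have hball : ∀ w, w ∈ sF → ∃ ε : ℝ, 0 < ε ∧ Metric.ball (0 : ℝ) ε ⊆ ti w := by
    intro w hw
    have h0 : (topDualPairing ℝ X).flip (0 : WeakBilin (topDualPairing ℝ X).flip) w = 0 := by
      exact LinearMap.congr_fun (map_zero (topDualPairing ℝ X).flip) w
    have := hti w
    rw [h0] at this
    obtain ⟨ε, hε, hball⟩ := Metric.mem_nhds_iff.1 this
    exact ⟨ε, hε, hball⟩
  choose εf hεf hεball using hball
  by_cases hne : sF.Nonempty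
  · set εg : WeakDual ℝ X → ℝ := fun w => if h : w ∈ sF then εf w h else 1 with hεg
    refine ⟨sF, sF.inf' hne εg, ?_, ?_⟩
    · rw [Finset.lt_inf'_iff]
      intro w hw
      simp only [hεg, dif_pos hw]
      exact hεf w hw
    · intro z hz
      apply htU
      apply hsub
      intro w hw
      have hwsF : w ∈ sF := by rwa [hsF, Set.Finite.mem_toFinset]
      have h1 := hz w hwsF
      have h2 : sF.inf' hne εg ≤ εg w := Finset.inf'_le εg hwsF
      rw [hεg] at h2
      simp only [dif_pos hwsF] at h2
      apply hεball w hwsF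
      rw [Metric.mem_ball, dist_zero_right, Real.norm_eq_abs]
      exact lt_of_lt_of_le h1 h2
  · refine ⟨∅, 1, one_pos, ?_⟩
    have hIempty : I = ∅ := by
      by_contra hI
      obtain ⟨w, hw⟩ := Set.nonempty_iff_ne_empty.2 hI
      exact hne ⟨w, (Set.Finite.mem_toFinset hIfin).2 hw⟩
    intro z _
    apply htU
    apply hsub
    intro w hw
    rw [hIempty] at hw
    exact absurd hw (Set.notMem_empty w)

lemma RS_line {K₀ : Set (WeakSpace ℝ X)} (hK : IsCompact K₀) {v : X} (hv : v ≠ 0)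
    (hline : ∀ t : ℝ, toWeakSpace ℝ X (t • v) ∈ K₀) : False := by
  have hT2 : T2Space (WeakSpace ℝ X) := RS_weak_t2
  have hv' : toWeakSpace ℝ X v ≠ (0 : WeakSpace ℝ X) := fun hc =>
    hv (by rwa [map_eq_zero_iff _ (toWeakSpace ℝ X).injective] at hc)
  have hemb := isClosedEmbedding_smul_left (𝕜 := ℝ) hv'
  have hrange : Set.range (fun t : ℝ => t • toWeakSpace ℝ X v) ⊆ K₀ := by
    rintro _ ⟨t, rfl⟩
    show t • toWeakSpace ℝ X v ∈ K₀
    rw [← map_smul]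
    exact hline t
  have hcr : IsCompact (Set.range fun t : ℝ => t • toWeakSpace ℝ X v) :=
    hK.of_isClosed_subset hemb.isClosed_range hrange
  rw [← Set.image_univ, ← hemb.isEmbedding.isCompact_iff] at hcr
  exact noncompact_univ ℝ hcr

end RSGeo
section RSLev
set_option linter.unusedSectionVars false
open Filter Topology

variable (g : X → EReal)

/-- Sublevel set. -/
def RS_lev (r : ℝ) : Set X := {x | g x ≤ (r : EReal)}

/-- The pre-annihilator of a subspace of the dual. -/
def RS_R (Vs : Submodule ℝ (WeakDual ℝ X)) : Submodule ℝ X where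
  carrier := {d | ∀ w, w ∈ Vs → w d = 0}
  add_mem' := fun ha hb w hw => by rw [map_add, ha w hw, hb w hw, add_zero]
  zero_mem' := fun w _ => map_zero w
  smul_mem' := fun c d hd w hw => by
    rw [map_smul, hd w hw, smul_eq_mul, mul_zero]

lemma RS_mem_R {Vs : Submodule ℝ (WeakDual ℝ X)} {d : X} :
    d ∈ RS_R Vs ↔ ∀ w, w ∈ Vs → w d = 0 := Iff.rfl

variable {g} {D' : Set (WeakDual ℝ X)} {cD : WeakDual ℝ X → ℝ}

lemma RS_lev_convex (hchar : ∀ (r : ℝ) x, g x ≤ (r : EReal) ↔ ∀ w ∈ D', w x ≤ r + cD w)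
    (r : ℝ) : Convex ℝ (RS_lev g r) := by
  intro x hx y hy a b ha hb hab
  have hx' : g x ≤ (r : EReal) := hx
  have hy' : g y ≤ (r : EReal) := hy
  show g (a • x + b • y) ≤ (r : EReal)
  rw [hchar]
  intro w hw
  have h1 := (hchar r x).1 hx' w hw
  have h2 := (hchar r y).1 hy' w hw
  have happ : w (a • x + b • y) = a * w x + b * w y := by
    rw [map_add, map_smul, map_smul]; rfl
  rw [happ]
  have h3 : a * (r + cD w) + b * (r + cD w) = r + cD w := by rw [← add_mul, hab, one_mul]
  nlinarith [mul_le_mul_of_nonneg_left h1 ha, mul_le_mul_of_nonneg_left h2 hb]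

lemma RS_lev_image_closed (hchar : ∀ (r : ℝ) x, g x ≤ (r : EReal) ↔ ∀ w ∈ D', w x ≤ r + cD w)
    (r : ℝ) : IsClosed (toWeakSpace ℝ X '' RS_lev g r) := by
  have himg : toWeakSpace ℝ X '' RS_lev g r =
      ⋂ w ∈ D', {z : WeakSpace ℝ X | w ((toWeakSpace ℝ X).symm z) ≤ r + cD w} := by
    ext z
    rw [RS_mem_tau]
    simp only [Set.mem_iInter, mem_setOf_eq]
    exact hchar r _
  rw [himg]
  exact isClosed_biInter fun w _ => isClosed_le (RS_ev_continuous w) continuous_const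

lemma RS_D'_sub_V {Vs : Submodule ℝ (WeakDual ℝ X)}
    (hV : closure (coneHull (convexHull ℝ D')) = (Vs : Set (WeakDual ℝ X))) :
    D' ⊆ (Vs : Set (WeakDual ℝ X)) := by
  intro w hw
  rw [← hV]
  exact subset_closure (Or.inr ⟨1, one_pos, w, subset_convexHull ℝ D' hw, (one_smul ℝ w).symm⟩)

lemma RS_lev_add_R (hchar : ∀ (r : ℝ) x, g x ≤ (r : EReal) ↔ ∀ w ∈ D', w x ≤ r + cD w)
    {Vs : Submodule ℝ (WeakDual ℝ X)}
    (hV : closure (coneHull (convexHull ℝ D')) = (Vs : Set (WeakDual ℝ X)))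
    {r : ℝ} {x d : X} (hx : x ∈ RS_lev g r) (hd : d ∈ RS_R Vs) : x + d ∈ RS_lev g r := by
  have hx' : g x ≤ (r : EReal) := hx
  show g (x + d) ≤ (r : EReal)
  rw [hchar]
  intro w hw
  have h1 := (hchar r x).1 hx' w hw
  have h2 : w d = 0 := hd w (RS_D'_sub_V hV hw)
  rw [map_add, h2, add_zero]
  exact h1

lemma RS_rec_mem_R (hchar : ∀ (r : ℝ) x, g x ≤ (r : EReal) ↔ ∀ w ∈ D', w x ≤ r + cD w)
    {Vs : Submodule ℝ (WeakDual ℝ X)}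
    (hV : closure (coneHull (convexHull ℝ D')) = (Vs : Set (WeakDual ℝ X)))
    {r : ℝ} {x₀ d : X} (h : ∀ s : ℝ, 0 < s → x₀ + s • d ∈ RS_lev g r) : d ∈ RS_R Vs := by
  have hD' : ∀ w ∈ D', w d ≤ 0 := by
    intro w hw
    by_contra hpos
    push_neg at hpos
    set s : ℝ := max 1 ((r + cD w - w x₀ + 1) / (w d)) with hs
    have hs0 : 0 < s := lt_of_lt_of_le one_pos (le_max_left _ _)
    have hmem := (hchar r _).1 (h s hs0) w hw
    rw [map_add, map_smul, smul_eq_mul] at hmem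
    have h4 : r + cD w - w x₀ + 1 ≤ s * w d := by
      calc r + cD w - w x₀ + 1 = (r + cD w - w x₀ + 1) / (w d) * (w d) :=
            (div_mul_cancel₀ _ (ne_of_gt hpos)).symm
        _ ≤ s * w d := mul_le_mul_of_nonneg_right (le_max_right _ _) hpos.le
    linarith
  have hΦ : (Vs : Set (WeakDual ℝ X)) ⊆ {w : WeakDual ℝ X | w d ≤ 0} := by
    rw [← hV]
    apply closure_minimal
    · rintro w (hw | ⟨c, hc, b, hb, rfl⟩)
      · have hw0 : w = 0 := hw
        subst hw0
        show (0 : WeakDual ℝ X) d ≤ 0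
        exact le_of_eq rfl
      · have hbd : b d ≤ 0 := by
          have hconv : Convex ℝ {w : WeakDual ℝ X | w d ≤ 0} := by
            intro w1 h1 w2 h2 a b' ha hb' hab
            show (a • w1 + b' • w2) d ≤ 0
            have : (a • w1 + b' • w2) d = a * w1 d + b' * w2 d := rfl
            rw [this]
            nlinarith [mul_le_mul_of_nonneg_left h1 ha, mul_le_mul_of_nonneg_left h2 hb']
          exact convexHull_min hD' hconv hb
        show (c • b) d ≤ 0
        have : (c • b) d = c * b d := rfl
        rw [this]
        exact mul_nonpos_of_nonneg_of_nonpos hc.le hbd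
    · have : {w : WeakDual ℝ X | w d ≤ 0} = (fun w : WeakDual ℝ X => w d) ⁻¹' Iic 0 := rfl
      rw [this]
      exact IsClosed.preimage (WeakDual.eval_continuous d) isClosed_Iic
  intro w hw
  have h1 : w d ≤ 0 := hΦ hw
  have h2 : (-w) d ≤ 0 := hΦ (Vs.neg_mem hw)
  have h3 : (-w) d = -(w d) := rfl
  linarith [h3 ▸ h2]

lemma RS_R_findim (hchar : ∀ (r : ℝ) x, g x ≤ (r : EReal) ↔ ∀ w ∈ D', w x ≤ r + cD w)
    {Vs : Submodule ℝ (WeakDual ℝ X)}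
    (hV : closure (coneHull (convexHull ℝ D')) = (Vs : Set (WeakDual ℝ X)))
    {r₀ : ℝ} {x₀ : X} (hx₀ : x₀ ∈ RS_lev g r₀)
    (hlc : IsLocCompactSet (toWeakSpace ℝ X '' RS_lev g r₀)) :
    FiniteDimensional ℝ (RS_R Vs) := by
  classical
  set τ := toWeakSpace ℝ X with hτ
  -- the translate x₀ + R, inside the sublevel set
  set A : Set (WeakSpace ℝ X) := τ '' ((fun d => x₀ + d) '' (RS_R Vs : Set X)) with hA
  have hAsub : A ⊆ τ '' RS_lev g r₀ := by
    rintro _ ⟨_, ⟨d, hd, rfl⟩, rfl⟩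
    exact ⟨x₀ + d, RS_lev_add_R hchar hV hx₀ hd, rfl⟩
  have hAclosed : IsClosed A := by
    have : A = ⋂ w ∈ (Vs : Set (WeakDual ℝ X)),
        {z : WeakSpace ℝ X | w (τ.symm z) = w x₀} := by
      ext z
      simp only [hA, Set.mem_iInter, mem_setOf_eq]
      constructor
      · rintro ⟨_, ⟨d, hd, rfl⟩, rfl⟩ w hw
        rw [LinearEquiv.symm_apply_apply, map_add, hd w hw, add_zero]
      · intro hz
        refine ⟨τ.symm z, ⟨τ.symm z - x₀, fun w hw => ?_,
          show x₀ + (τ.symm z - x₀) = τ.symm z by rw [← add_sub_assoc, add_sub_cancel_left]⟩,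
          LinearEquiv.apply_symm_apply _ _⟩
        rw [map_sub, hz w hw, sub_self]
    rw [this]
    exact isClosed_biInter fun w _ =>
      isClosed_eq (RS_ev_continuous w) continuous_const
  have hAlc : IsLocCompactSet A := RS_isLocCompactSet_closed_subset (hlc) hAclosed hAsub
  -- translate to the origin
  have hRlc : IsLocCompactSet (τ '' (RS_R Vs : Set X)) := by
    have himg := RS_isLocCompactSet_image (Homeomorph.addLeft (-(τ x₀))) hAlc
    have hBeq : (Homeomorph.addLeft (-(τ x₀))) '' A = τ '' (RS_R Vs : Set X) := by
      ext z
      constructor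
      · rintro ⟨_, ⟨_, ⟨d, hd, rfl⟩, rfl⟩, rfl⟩
        refine ⟨d, hd, ?_⟩
        show τ d = -(τ x₀) + τ (x₀ + d)
        rw [map_add]
        abel
      · rintro ⟨d, hd, rfl⟩
        refine ⟨τ (x₀ + d), ⟨x₀ + d, ⟨d, hd, rfl⟩, rfl⟩, ?_⟩
        show -(τ x₀) + τ (x₀ + d) = τ d
        rw [map_add]
        abel
    rwa [hBeq] at himg
  -- compact neighborhood of 0 in τ '' R
  have h0mem : (0 : WeakSpace ℝ X) ∈ τ '' (RS_R Vs : Set X) :=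
    ⟨0, Submodule.zero_mem _, map_zero _⟩
  obtain ⟨K₀, hK₀sub, hK₀c, hK₀n⟩ := hRlc 0 h0mem
  rw [mem_nhdsWithin_iff_exists_mem_nhds_inter] at hK₀n
  obtain ⟨U, hU, hUK⟩ := hK₀n
  obtain ⟨sF, ε, hε, hcyl⟩ := RS_weak_nhds_cylinder hU
  -- the injection into a finite product
  let ψ : RS_R Vs →ₗ[ℝ] (sF → ℝ) :=
    { toFun := fun d w => (w : WeakDual ℝ X) (d : X)
      map_add' := fun a b => funext fun w => by
        show (w : WeakDual ℝ X) ((a : X) + (b : X)) = _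
        rw [map_add]; rfl
      map_smul' := fun c a => funext fun w => by
        show (w : WeakDual ℝ X) (c • (a : X)) = _
        rw [map_smul]; rfl }
  have hinj : Function.Injective ψ := by
    rw [injective_iff_map_eq_zero]
    intro d hd0
    by_contra hdne
    have hdX : (d : X) ≠ 0 := fun hc => hdne (Subtype.ext hc)
    refine RS_line hK₀c hdX fun t => ?_
    apply hUK
    constructor
    · apply hcyl
      intro w hw
      rw [LinearEquiv.symm_apply_apply, map_smul, smul_eq_mul]
      have hwd : w (d : X) = 0 := by
        have := congrFun hd0 ⟨w, hw⟩
        exact this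
      rw [hwd, mul_zero, abs_zero]
      exact hε
    · exact ⟨t • (d : X), Submodule.smul_mem _ t d.2, rfl⟩
  exact FiniteDimensional.of_injective ψ hinj

end RSLev
section RSKlee
set_option linter.unusedSectionVars false
open Filter Topology

variable {Y : Type*} [AddCommGroup Y] [Module ℝ Y] [TopologicalSpace Y]
  [IsTopologicalAddGroup Y] [ContinuousSMul ℝ Y] [LocallyConvexSpace ℝ Y]

lemma RS_closure_subset_add {s U : Set Y} (hU : U ∈ 𝓝 (0 : Y)) : closure s ⊆ s + U := by
  intro x hx
  have hN : (fun y => x - y) '' U ∈ 𝓝 x := by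
    have hmap := (Homeomorph.subLeft x).map_nhds_eq (0 : Y)
    have himg : (fun y => x - y) '' U ∈ Filter.map (Homeomorph.subLeft x) (𝓝 (0 : Y)) :=
      Filter.image_mem_map hU
    rw [hmap] at himg
    simpa using himg
  obtain ⟨y, hyN, hys⟩ := mem_closure_iff_nhds.1 hx _ hN
  obtain ⟨u, hu, rfl⟩ := hyN
  exact ⟨x - u, hys, u, hu, sub_add_cancel x u⟩

lemma RS_seg {s : Set Y} (hs : Convex ℝ s) (h0 : (0 : Y) ∈ s) {x : Y} (hx : x ∈ s)
    {t : ℝ} (ht0 : 0 ≤ t) (ht1 : t ≤ 1) : t • x ∈ s :=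
  hs.smul_mem_of_zero_mem h0 hx ⟨ht0, ht1⟩

lemma RS_klee {C : Set Y} (hconv : Convex ℝ C) (hcl : IsClosed C) (h0 : (0 : Y) ∈ C)
    {K : Set Y} (hKc : IsCompact K) (hKn : K ∈ 𝓝[C] (0 : Y))
    (hrec : ∀ y : Y, (∀ s : ℝ, 0 < s → s • y ∈ C) → y = 0) : IsCompact C := by
  classical
  rw [mem_nhdsWithin_iff_exists_mem_nhds_inter] at hKn
  obtain ⟨U, hU, hUK⟩ := hKn
  -- a symmetric neighborhood V₀ with V₀ + V₀ ⊆ U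
  obtain ⟨V, hV, hVsub⟩ := exists_nhds_half_neg hU
  have hnegV : -V ∈ 𝓝 (0 : Y) := by
    have hmap := (Homeomorph.neg Y).map_nhds_eq (0 : Y)
    have himg : (fun y : Y => -y) '' V ∈ Filter.map (Homeomorph.neg Y) (𝓝 (0 : Y)) :=
      Filter.image_mem_map hV
    rw [hmap] at himg
    simpa [Set.image_neg_eq_neg] using himg
  set V₀ : Set Y := V ∩ (-V) with hV₀
  have hV₀n : V₀ ∈ 𝓝 (0 : Y) := Filter.inter_mem hV hnegV
  have hV₀add : ∀ v ∈ V₀, ∀ w ∈ V₀, v + w ∈ U := by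
    intro v hv w hw
    have h1 : -w ∈ V := by
      have := hw.2
      rwa [Set.mem_neg] at this
    have := hVsub v hv.1 (-w) h1
    rwa [sub_neg_eq_add] at this
  -- a closed convex neighborhood M of 0 inside U
  obtain ⟨W, ⟨hWn, hWconv⟩, hWV₀⟩ :=
    (LocallyConvexSpace.convex_basis (𝕜 := ℝ) (0 : Y)).mem_iff.1 hV₀n
  set M : Set Y := closure W with hM
  have hMU : M ⊆ U := by
    intro m hm
    obtain ⟨w, hw, v, hv, rfl⟩ := RS_closure_subset_add hV₀n hm
    exact hV₀add w (hWV₀ hw) v hv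
  have hMconv : Convex ℝ M := hWconv.closure
  have hMcl : IsClosed M := isClosed_closure
  have hMnhds : M ∈ 𝓝 (0 : Y) := Filter.mem_of_superset hWn subset_closure
  -- the compact convex "cap" A
  set A : Set Y := C ∩ M with hAdef
  have hAclosed : IsClosed A := hcl.inter hMcl
  have hAsub : A ⊆ K := fun x hx => hUK ⟨hMU hx.2, hx.1⟩
  have hAc : IsCompact A := hKc.of_isClosed_subset hAclosed hAsub
  have hAconv : Convex ℝ A := hconv.inter hMconv
  have h0A : (0 : Y) ∈ A := ⟨h0, subset_closure (mem_of_mem_nhds hWn)⟩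
  -- main case split
  rcases em (∃ n : ℕ, C ⊆ ((n : ℝ) + 1) • A) with ⟨n, hn⟩ | hnot
  · have hsm : IsCompact (((n : ℝ) + 1) • A) := by
      rw [← Set.image_smul]
      exact hAc.image (continuous_const_smul _)
    exact hsm.of_isClosed_subset hcl hn
  exfalso
  push_neg at hnot
  have hex : ∀ n : ℕ, ∃ x, x ∈ C ∧ x ∉ ((n : ℝ) + 1) • A := by
    intro n
    obtain ⟨x, hx1, hx2⟩ := Set.not_subset.1 (hnot n)
    exact ⟨x, hx1, hx2⟩
  choose xs hxsC hxsA using hex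
  set T : ℕ → Set ℝ := fun n => {t | t ∈ Icc (0 : ℝ) 1 ∧ t • xs n ∈ A} with hT
  have hTne : ∀ n, (T n).Nonempty := fun n =>
    ⟨0, ⟨le_rfl, zero_le_one⟩, by rw [zero_smul]; exact h0A⟩
  have hTc : ∀ n, IsCompact (T n) := by
    intro n
    have : T n = Icc (0 : ℝ) 1 ∩ (fun t : ℝ => t • xs n) ⁻¹' A := rfl
    rw [this]
    exact isCompact_Icc.inter_right (hAclosed.preimage (continuous_id.smul continuous_const))
  set τs : ℕ → ℝ := fun n => sSup (T n) with hτs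
  have hτmem : ∀ n, τs n ∈ T n := fun n => (hTc n).sSup_mem (hTne n)
  have hint : ∀ n (t : ℝ), 0 ≤ t → t ≤ τs n → t • xs n ∈ A := by
    intro n t ht0 htτ
    rcases eq_or_lt_of_le (le_trans ht0 htτ) with heq | hτpos
    · have ht0' : t = 0 := le_antisymm (heq ▸ htτ) ht0
      rw [ht0', zero_smul]; exact h0A
    · have hc0 : 0 ≤ t / τs n := div_nonneg ht0 (le_of_lt hτpos)
      have hc1 : t / τs n ≤ 1 := (div_le_one hτpos).2 htτ
      have := RS_seg hAconv h0A (hτmem n).2 hc0 hc1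
      rwa [smul_smul, div_mul_cancel₀ _ (ne_of_gt hτpos)] at this
  have hτlt : ∀ n, τs n < 1 / ((n : ℝ) + 1) := by
    intro n
    by_contra hle
    push_neg at hle
    have hpos : (0 : ℝ) < (n : ℝ) + 1 := by positivity
    have h1 : (1 / ((n : ℝ) + 1)) • xs n ∈ A := hint n _ (by positivity) hle
    refine hxsA n ⟨(1 / ((n : ℝ) + 1)) • xs n, h1, ?_⟩
    show ((n : ℝ) + 1) • (1 / ((n : ℝ) + 1)) • xs n = xs n
    rw [smul_smul, mul_one_div, div_self (ne_of_gt hpos), one_smul]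
  set ys : ℕ → Y := fun n => τs n • xs n with hys
  have hysA : ∀ n, ys n ∈ A := fun n => (hτmem n).2
  have hτ1 : ∀ n, τs n < 1 := by
    intro n
    refine lt_of_lt_of_le (hτlt n) ?_
    rw [div_le_one (by positivity)]
    have : (1 : ℝ) ≤ (n : ℝ) + 1 := by
      have : (0 : ℝ) ≤ (n : ℝ) := n.cast_nonneg
      linarith
    exact this
  have hysM : ∀ n, ys n ∉ interior M := by
    intro n hyint
    have hcont : Continuous fun t : ℝ => t • xs n := continuous_id.smul continuous_const
    have hpre : IsOpen ((fun t : ℝ => t • xs n) ⁻¹' interior M) :=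
      isOpen_interior.preimage hcont
    have hτin : τs n ∈ (fun t : ℝ => t • xs n) ⁻¹' interior M := hyint
    obtain ⟨δ, hδ, hball⟩ := Metric.isOpen_iff.1 hpre _ hτin
    set t : ℝ := min 1 (τs n + δ / 2) with ht
    have hττ : 0 ≤ τs n := (hτmem n).1.1
    have htτ : τs n < t := lt_min (hτ1 n) (by linarith)
    have ht1 : t ≤ 1 := min_le_left _ _
    have htb : t ∈ Metric.ball (τs n) δ := by
      rw [Metric.mem_ball, Real.dist_eq, abs_lt]
      constructor
      · linarith
      · have h1 : t ≤ τs n + δ / 2 := min_le_right _ _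
        linarith
    have htM : t • xs n ∈ M := interior_subset (hball htb)
    have htC : t • xs n ∈ C := RS_seg hconv h0 (hxsC n) (le_trans hττ htτ.le) ht1
    have htT : t ∈ T n := ⟨⟨le_trans hττ htτ.le, ht1⟩, htC, htM⟩
    have : t ≤ τs n := le_csSup (hTc n).bddAbove htT
    linarith
  set l : Filter Y := Filter.map ys atTop with hl
  have hlA : l ≤ 𝓟 A := Filter.le_principal_iff.2 (Filter.mem_map.2 (Filter.univ_mem' hysA))
  haveI : l.NeBot := Filter.map_neBot
  obtain ⟨y, hyA, hcly⟩ := hAc hlA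
  have hyM : y ∉ interior M := by
    have hmem : (interior M)ᶜ ∈ l := Filter.mem_map.2 (Filter.univ_mem' hysM)
    have hy1 : y ∈ closure ((interior M)ᶜ) :=
      mem_closure_iff_clusterPt.2 (hcly.mono (Filter.le_principal_iff.2 hmem))
    rwa [IsClosed.closure_eq (isClosed_compl_iff.2 isOpen_interior)] at hy1
  have hy0 : y ≠ 0 := fun hc => hyM (hc ▸ mem_interior_iff_mem_nhds.2 hMnhds)
  apply hy0
  apply hrec
  intro s hs
  set S : Set Y := {z : Y | s • z ∈ C} with hS
  have hScl : IsClosed S := hcl.preimage (continuous_const_smul s)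
  have hmem : S ∈ l := by
    rw [hl, Filter.mem_map]
    have hfor : ∀ n ∈ {m : ℕ | ⌈s⌉₊ ≤ m}, n ∈ ys ⁻¹' S := by
      intro n hn
      have hτ0 : 0 ≤ τs n := (hτmem n).1.1
      have hsτ0 : 0 ≤ s * τs n := mul_nonneg hs.le hτ0
      have hsn : s ≤ (n : ℝ) + 1 := by
        have h1 : s ≤ (⌈s⌉₊ : ℝ) := Nat.le_ceil s
        have h2 : ((⌈s⌉₊ : ℕ) : ℝ) ≤ (n : ℝ) := Nat.cast_le.2 hn
        linarith
      have hτn := (hτlt n).le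
      have hle1 : s * τs n ≤ 1 := by
        have h3 : s * τs n ≤ s * (1 / ((n : ℝ) + 1)) := mul_le_mul_of_nonneg_left hτn hs.le
        rw [mul_one_div] at h3
        have h4 : s / ((n : ℝ) + 1) ≤ 1 := (div_le_one (by positivity)).2 hsn
        linarith
      show s • ys n ∈ C
      have : s • ys n = (s * τs n) • xs n := by rw [hys]; exact smul_smul s (τs n) (xs n)
      rw [this]
      exact RS_seg hconv h0 (hxsC n) hsτ0 hle1
    exact Filter.mem_of_superset (Filter.mem_atTop ⌈s⌉₊) hfor
  have hy2 : y ∈ closure S :=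
    mem_closure_iff_clusterPt.2 (hcly.mono (Filter.le_principal_iff.2 hmem))
  rw [hScl.closure_eq] at hy2
  exact hy2

end RSKlee
section RSCompl
set_option linter.unusedSectionVars false
open Filter Topology

lemma RS_exists_complement (R : Submodule ℝ X) [FiniteDimensional ℝ R] :
    ∃ (n : ℕ) (e : Fin n → X) (q : Fin n → WeakDual ℝ X),
      (∀ i, e i ∈ R) ∧ (∀ i j, q i (e j) = if i = j then 1 else 0) ∧
      (∀ v ∈ R, v = ∑ i, q i v • e i) := by
  classical
  set b := Module.finBasis ℝ R with hb
  set n := Module.finrank ℝ R with hn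
  have hsurj : Function.Surjective
      ((R.subtype.dualMap : Module.Dual ℝ X →ₗ[ℝ] Module.Dual ℝ R) ∘
        (ContinuousLinearMap.toLinearMap : (X →L[ℝ] ℝ) → Module.Dual ℝ X)) :=
    SeparatingDual.dualMap_surjective_iff.2 R.injective_subtype
  choose q hq using fun i : Fin n => hsurj (b.coord i)
  refine ⟨n, fun i => (b i : X), q, fun i => (b i).2, ?_, ?_⟩
  · intro i j
    have h1 : q i ((b j : R) : X) = b.coord i (b j) := by
      have := congrArg (fun φ => φ (b j)) (hq i)
      exact this
    refine h1.trans ?_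
    rw [Module.Basis.coord_apply, Module.Basis.repr_self, Finsupp.single_apply]
    simp [eq_comm]
  · intro v hv
    have hrep := b.sum_repr ⟨v, hv⟩
    have hcoords : ∀ i, q i v = b.repr ⟨v, hv⟩ i := by
      intro i
      have := congrArg (fun φ => φ (⟨v, hv⟩ : R)) (hq i)
      simpa [Module.Basis.coord_apply] using this
    calc v = ((∑ i, b.repr ⟨v, hv⟩ i • b i : R) : X) := by rw [hrep]
      _ = ∑ i, b.repr ⟨v, hv⟩ i • ((b i : R) : X) := by
          rw [Submodule.coe_sum]
          exact Finset.sum_congr rfl fun i _ => rfl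
      _ = ∑ i, q i v • ((b i : R) : X) := by
          exact Finset.sum_congr rfl fun i _ => by rw [hcoords i]

lemma RS_g_invariant {g : X → EReal} {D' : Set (WeakDual ℝ X)} {cD : WeakDual ℝ X → ℝ}
    (hchar : ∀ (r : ℝ) x, g x ≤ (r : EReal) ↔ ∀ w ∈ D', w x ≤ r + cD w)
    {Vs : Submodule ℝ (WeakDual ℝ X)}
    (hV : closure (coneHull (convexHull ℝ D')) = (Vs : Set (WeakDual ℝ X)))
    {x d : X} (hd : d ∈ RS_R Vs) : g (x + d) = g x := by
  refine RS_eq_of_forall_le_iff fun r => ⟨fun h => ?_, fun h => ?_⟩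
  · have := RS_lev_add_R hchar hV (r := r) (x := x + d) (d := -d) h (Submodule.neg_mem _ hd)
    rwa [add_neg_cancel_right] at this
  · exact RS_lev_add_R hchar hV h hd

lemma RS_lc_transfer {F : X → EReal} {p : WeakDual ℝ X}
    (hflc : ∀ r : ℝ, IsLocCompactSet (toWeakSpace ℝ X '' {x | F x ≤ (r : EReal)}))
    (hcl : ∀ r : ℝ, IsClosed (toWeakSpace ℝ X '' {x | F x - (p x : EReal) ≤ (r : EReal)}))
    (r : ℝ) : IsLocCompactSet (toWeakSpace ℝ X '' {x | F x - (p x : EReal) ≤ (r : EReal)}) := by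
  intro z hz
  set τ := toWeakSpace ℝ X with hτ
  set G : Set X := {x | F x - (p x : EReal) ≤ (r : EReal)} with hG
  have hzG : z ∈ τ '' G := hz
  set x₁ := τ.symm z with hx₁
  have hx₁memG : x₁ ∈ G := RS_mem_tau.1 hzG
  have hx₁mem : F x₁ - (p x₁ : EReal) ≤ (r : EReal) := hx₁memG
  set s : ℝ := r + p x₁ + 1 with hs
  have hx₁s : z ∈ τ '' {x | F x ≤ (s : EReal)} := by
    rw [RS_mem_tau]
    show F x₁ ≤ (s : EReal)
    have h1 : F x₁ ≤ ((r + p x₁ : ℝ) : EReal) := RS_sub_coe_le_iff.1 hx₁mem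
    refine le_trans h1 ?_
    exact_mod_cast le_of_lt (by linarith : r + p x₁ < s)
  obtain ⟨K, hKsub, hKc, hKn⟩ := hflc s z hx₁s
  rw [mem_nhdsWithin_iff_exists_mem_nhds_inter] at hKn
  obtain ⟨U, hU, hUK⟩ := hKn
  set N : Set (WeakSpace ℝ X) := (fun z' => p (τ.symm z')) ⁻¹' (Metric.ball (p x₁) 1) with hN
  have hNopen : IsOpen N := (Metric.isOpen_ball).preimage (RS_ev_continuous p)
  have hNz : z ∈ N := by
    rw [hN]
    show p (τ.symm z) ∈ Metric.ball (p x₁) 1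
    rw [hx₁]
    exact Metric.mem_ball_self one_pos
  refine ⟨K ∩ (τ '' G), fun w hw => hw.2, hKc.inter_right (hcl r), ?_⟩
  rw [mem_nhdsWithin_iff_exists_mem_nhds_inter]
  refine ⟨U ∩ N, Filter.inter_mem hU (hNopen.mem_nhds hNz), ?_⟩
  rintro z' ⟨⟨hz'U, hz'N⟩, hz'G⟩
  refine ⟨hUK ⟨hz'U, ?_⟩, hz'G⟩
  rw [RS_mem_tau]
  show F (τ.symm z') ≤ (s : EReal)
  have h1G : τ.symm z' ∈ G := RS_mem_tau.1 hz'G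
  have h1 : F (τ.symm z') - (p (τ.symm z') : EReal) ≤ (r : EReal) := h1G
  have h2 : F (τ.symm z') ≤ ((r + p (τ.symm z') : ℝ) : EReal) := RS_sub_coe_le_iff.1 h1
  refine le_trans h2 ?_
  have h3 : |p (τ.symm z') - p x₁| < 1 := by
    have := hz'N
    rw [hN] at this
    simpa [Real.dist_eq] using this
  have h4 : r + p (τ.symm z') ≤ s := by
    rw [hs]
    have := abs_lt.1 h3
    linarith [this.2]
  exact_mod_cast h4

end RSCompl
section RSMain
set_option linter.unusedSectionVars false
open Filter Topology

lemma RS_main {g : X → EReal} {D' : Set (WeakDual ℝ X)} {cD : WeakDual ℝ X → ℝ}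
    (hchar : ∀ (r : ℝ) x, g x ≤ (r : EReal) ↔ ∀ w ∈ D', w x ≤ r + cD w)
    (hgbot : ∀ x, g x ≠ ⊥) {x₀ : X} {r₀ : ℝ} (hx₀ : x₀ ∈ RS_lev g r₀)
    (hlc : ∀ r : ℝ, IsLocCompactSet (toWeakSpace ℝ X '' RS_lev g r))
    {Vs : Submodule ℝ (WeakDual ℝ X)}
    (hV : closure (coneHull (convexHull ℝ D')) = (Vs : Set (WeakDual ℝ X))) :
    ∃ xm : X, (∀ x, g xm ≤ g x) ∧
      ∃ (K : Set X) (Vm : Submodule ℝ X), K.Nonempty ∧ Convex ℝ K ∧ WCompact K ∧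
        FiniteDimensional ℝ Vm ∧ {x | g x ≤ g xm} = K + (Vm : Set X) := by
  classical
  set τ := toWeakSpace ℝ X with hτ
  set R : Submodule ℝ X := RS_R Vs with hRdef
  haveI hfd : FiniteDimensional ℝ R := RS_R_findim hchar hV hx₀ (hlc r₀)
  obtain ⟨n, e, q, he, hqe, hrepr⟩ := RS_exists_complement R
  set π : X → X := fun x => ∑ i, q i x • e i with hπ
  have hπR : ∀ x, π x ∈ R := fun x =>
    Submodule.sum_mem _ fun i _ => Submodule.smul_mem _ _ (he i)
  set Wset : Set X := {x | ∀ i, q i x = 0} with hWset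
  have hqπ : ∀ x j, q j (π x) = q j x := by
    intro x j
    rw [hπ]
    dsimp only
    rw [map_sum]
    have h1 : ∀ i : Fin n, q j (q i x • e i) = if j = i then q i x else 0 := by
      intro i
      have : q j (q i x • e i) = q i x * q j (e i) := by rw [map_smul]; rfl
      rw [this, hqe j i]
      by_cases h : j = i
      · simp [h]
      · simp [h]
    rw [Finset.sum_congr rfl fun i _ => h1 i, Finset.sum_ite_eq]
    simp
  have hsubW : ∀ x, x - π x ∈ Wset := by
    intro x i
    show q i (x - π x) = 0
    rw [map_sub, hqπ, sub_self]
  have hWR0 : ∀ v, v ∈ R → v ∈ Wset → v = 0 := by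
    intro v hv hw
    rw [hrepr v hv]
    exact Finset.sum_eq_zero fun i _ => by rw [hw i, zero_smul]
  have hWconv : Convex ℝ Wset := by
    intro a ha b hb s t hs ht hst
    intro i
    show q i (s • a + t • b) = 0
    rw [map_add, map_smul, map_smul, ha i, hb i, smul_zero, smul_zero, add_zero]
  have hlevW_sub : ∀ (r : ℝ) (x : X), x ∈ RS_lev g r → x - π x ∈ RS_lev g r ∩ Wset := by
    intro r x hx
    refine ⟨?_, hsubW x⟩
    have := RS_lev_add_R hchar hV hx (Submodule.neg_mem _ (hπR x))
    rwa [← sub_eq_add_neg] at this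
  have hdecomp : ∀ r : ℝ, RS_lev g r = (RS_lev g r ∩ Wset) + (R : Set X) := by
    intro r
    ext x
    constructor
    · intro hx
      exact ⟨x - π x, hlevW_sub r x hx, π x, hπR x,
        show (x - π x) + π x = x from sub_add_cancel x (π x)⟩
    · rintro ⟨k, hk, d, hd, rfl⟩
      exact RS_lev_add_R hchar hV hk.1 hd
  have hWclosed : IsClosed (τ '' Wset) := by
    have himg : τ '' Wset = ⋂ i, {z : WeakSpace ℝ X | q i (τ.symm z) = 0} := by
      ext z
      rw [RS_mem_tau]
      simp only [Set.mem_iInter, mem_setOf_eq]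
      exact Iff.rfl
    rw [himg]
    exact isClosed_iInter fun i => isClosed_eq (RS_ev_continuous (q i)) continuous_const
  have himage_inter : ∀ (S T : Set X), τ '' (S ∩ T) = τ '' S ∩ τ '' T :=
    fun S T => Set.image_inter τ.injective
  -- compactness of the caps
  have hcap : ∀ (r : ℝ) (x₁ : X), x₁ ∈ RS_lev g r →
      IsCompact (τ '' (RS_lev g r ∩ Wset)) := by
    intro r x₁ hx₁
    set ξ : X := x₁ - π x₁ with hξ
    have hξmem : ξ ∈ RS_lev g r ∩ Wset := hlevW_sub r x₁ hx₁
    set C : Set (WeakSpace ℝ X) := τ '' (RS_lev g r ∩ Wset) with hC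
    have hCconv : Convex ℝ C := by
      have h1 := ((RS_lev_convex hchar r).inter hWconv).linear_image
        (τ : X →ₗ[ℝ] WeakSpace ℝ X)
      rwa [LinearEquiv.coe_coe] at h1
    have hCclosed : IsClosed C := by
      rw [hC, himage_inter]
      exact (RS_lev_image_closed hchar r).inter hWclosed
    have hClc : IsLocCompactSet C := by
      refine RS_isLocCompactSet_closed_subset (hlc r) hCclosed ?_
      rw [hC, himage_inter]
      exact Set.inter_subset_left
    set h : WeakSpace ℝ X ≃ₜ WeakSpace ℝ X := Homeomorph.addLeft (-(τ ξ)) with hh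
    set C' : Set (WeakSpace ℝ X) := h '' C with hC'
    have hcoe : ∀ z, h z = -(τ ξ) + z := fun z => rfl
    have hC'conv : Convex ℝ C' := by
      have h1 := hCconv.translate (-(τ ξ))
      have h2 : (fun z => -(τ ξ) + z) '' C = C' := rfl
      rwa [h2] at h1
    have hC'closed : IsClosed C' := h.isClosedMap C hCclosed
    have h0C' : (0 : WeakSpace ℝ X) ∈ C' :=
      ⟨τ ξ, ⟨ξ, hξmem, rfl⟩, by rw [hcoe]; exact neg_add_cancel _⟩
    have hC'lc : IsLocCompactSet C' := RS_isLocCompactSet_image h hClc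
    obtain ⟨K, hKsub, hKc, hKn⟩ := hC'lc 0 h0C'
    have hrec : ∀ y : WeakSpace ℝ X, (∀ s : ℝ, 0 < s → s • y ∈ C') → y = 0 := by
      intro y hy
      set d : X := τ.symm y with hd
      have hmem : ∀ s : ℝ, 0 < s → ξ + s • d ∈ RS_lev g r ∩ Wset := by
        intro s hs
        obtain ⟨c, hcC, hceq⟩ := hy s hs
        obtain ⟨k, hk, rfl⟩ := hcC
        have hceq' : -(τ ξ) + τ k = s • y := hceq
        have hk_eq : k = ξ + s • d := by
          apply τ.injective
          rw [map_add, map_smul, hd, LinearEquiv.apply_symm_apply, ← hceq']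
          abel
        rwa [← hk_eq]
      have hdR : d ∈ R := RS_rec_mem_R hchar hV (x₀ := ξ) (fun s hs => (hmem s hs).1)
      have hdW : d ∈ Wset := by
        intro i
        have h1 := (hmem 1 one_pos).2 i
        show q i d = 0
        have h2 : q i (ξ + (1 : ℝ) • d) = 0 := h1
        rw [one_smul, map_add, hξmem.2 i, zero_add] at h2
        exact h2
      have hd0 : d = 0 := hWR0 d hdR hdW
      calc y = τ (τ.symm y) := (τ.apply_symm_apply y).symm
        _ = τ 0 := by rw [← hd, hd0]
        _ = 0 := map_zero τ
    have hC'c : IsCompact C' := RS_klee hC'conv hC'closed h0C' hKc hKn hrec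
    have hback : C = h.symm '' C' := by
      rw [hC']
      exact (Equiv.symm_image_image h.toEquiv C).symm
    show IsCompact C
    rw [hback]
    exact hC'c.image h.symm.continuous
  -- minimization over the compact cap
  set K₀ : Set X := RS_lev g r₀ ∩ Wset with hK₀
  have hx₀' := hlevW_sub r₀ x₀ hx₀
  set Sidx : Set ℝ := {t : ℝ | (RS_lev g t ∩ K₀).Nonempty} with hSidx
  have hr₀S : r₀ ∈ Sidx := ⟨x₀ - π x₀, hx₀'.1, hx₀'⟩
  haveI : Nonempty ↥Sidx := ⟨⟨r₀, hr₀S⟩⟩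
  have hlev_mono : ∀ {t t' : ℝ}, t ≤ t' → RS_lev g t ⊆ RS_lev g t' := by
    intro t t' h x hx
    have hx' : g x ≤ (t : EReal) := hx
    exact le_trans hx' (by exact_mod_cast h)
  set Z : ↥Sidx → Set (WeakSpace ℝ X) := fun t => τ '' (RS_lev g (t : ℝ) ∩ K₀) with hZ
  have hZne : ∀ t, (Z t).Nonempty := fun t => (t.2).image τ
  have hK₀c : IsCompact (τ '' K₀) := hcap r₀ x₀ hx₀
  have hZc : ∀ t, IsCompact (Z t) := by
    intro t
    have h1 : Z t = τ '' (RS_lev g (t : ℝ)) ∩ τ '' K₀ := himage_inter _ _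
    rw [h1]
    exact hK₀c.inter_left (RS_lev_image_closed hchar (t : ℝ))
  have hZcl : ∀ t, IsClosed (Z t) := by
    intro t
    have h1 : Z t = τ '' (RS_lev g (t : ℝ)) ∩ τ '' K₀ := himage_inter _ _
    have h2 : IsClosed (τ '' K₀) := by
      rw [hK₀, himage_inter]
      exact (RS_lev_image_closed hchar r₀).inter hWclosed
    rw [h1]
    exact (RS_lev_image_closed hchar (t : ℝ)).inter h2
  have hdir : Directed (· ⊇ ·) Z := by
    intro a b
    rcases le_total (a : ℝ) (b : ℝ) with hab | hab
    · exact ⟨a, subset_rfl,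
        Set.image_mono (Set.inter_subset_inter_left _ (hlev_mono hab))⟩
    · exact ⟨b, Set.image_mono (Set.inter_subset_inter_left _ (hlev_mono hab)),
        subset_rfl⟩
  obtain ⟨zm, hzm⟩ :=
    IsCompact.nonempty_iInter_of_directed_nonempty_isCompact_isClosed Z hdir hZne hZc hZcl
  set xm : X := τ.symm zm with hxm
  have hxmS : ∀ t : ↥Sidx, xm ∈ RS_lev g (t : ℝ) ∩ K₀ := by
    intro t
    exact RS_mem_tau.1 (Set.mem_iInter.1 hzm t)
  have hxmr₀ : g xm ≤ (r₀ : EReal) := (hxmS ⟨r₀, hr₀S⟩).1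
  have hxmin : ∀ x, g xm ≤ g x := by
    intro x
    by_contra hlt
    push_neg at hlt
    have hx_lev : x ∈ RS_lev g r₀ := le_of_lt (lt_of_lt_of_le hlt hxmr₀)
    set x' : X := x - π x with hx'
    have hx'mem := hlevW_sub r₀ x hx_lev
    have hgx' : g x' = g x := by
      rw [hx', sub_eq_add_neg]
      exact RS_g_invariant hchar hV (Submodule.neg_mem _ (hπR x))
    have hgxt : g x ≠ ⊤ := ne_top_of_lt (lt_of_lt_of_le hlt hxmr₀)
    set t : ℝ := (g x).toReal with ht
    have hgxeq : g x = (t : EReal) := (EReal.coe_toReal hgxt (hgbot x)).symm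
    have hx'lev : x' ∈ RS_lev g t := by
      show g x' ≤ (t : EReal)
      rw [hgx', hgxeq]
    have htS : t ∈ Sidx := ⟨x', hx'lev, hx'mem⟩
    have hle := (hxmS ⟨t, htS⟩).1
    have : g xm ≤ g x := by rw [hgxeq]; exact hle
    exact absurd this (not_le.2 hlt)
  have hgxm_t : g xm ≠ ⊤ := ne_top_of_le_ne_top (EReal.coe_ne_top r₀) hxmr₀
  set mr : ℝ := (g xm).toReal with hmr
  have hgxm_eq : g xm = (mr : EReal) := (EReal.coe_toReal hgxm_t (hgbot xm)).symm
  have hsol_eq : {x | g x ≤ g xm} = RS_lev g mr := by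
    ext x
    rw [mem_setOf_eq, hgxm_eq]
    exact Iff.rfl
  have hxm_lev : xm ∈ RS_lev g mr := by
    show g xm ≤ (mr : EReal)
    rw [← hgxm_eq]
  refine ⟨xm, hxmin, RS_lev g mr ∩ Wset, R, ?_, ?_, ?_, hfd, ?_⟩
  · exact ⟨xm - π xm, hlevW_sub mr xm hxm_lev⟩
  · exact (RS_lev_convex hchar mr).inter hWconv
  · exact hcap mr xm hxm_lev
  · rw [hsol_eq]
    exact hdecomp mr

end RSMain
/-- **Theorem 3.3 (Existence of optimal solutions).** Let `(f i)_{i ∈ ι} ⊆ Γ(X)`, with robust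
sum `f` proper and weakly inf-locally compact, and assume that the `w*`-closed conic hull of
the convex hull of `(⋃_{J ∈ 𝓕(ι)} Σ_{j ∈ J} dom f_j*) − x̄*` is a linear subspace of `X*`.
Then `sol(RP_{x̄*})` is nonempty; more precisely, it is the sum of a nonempty convex weakly
compact set and a finite-dimensional linear subspace of `X`. -/
theorem primal_solutions_existence [Nonempty ι] (f : ι → X → EReal) (p : WeakDual ℝ X)
    (hproper : ∀ i, EProper (f i)) (hlsc : ∀ i, LowerSemicontinuous (f i))
    (hconv : ∀ i, EConvexFn (f i))
    (hfproper : EProper (rsum f)) (hflc : WInfLocCompact (rsum f))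
    (hcone : ∃ V : Submodule ℝ (WeakDual ℝ X),
      closure (coneHull (convexHull ℝ
        ((fun q => q - p) '' (⋃ J ∈ {J : Finset ι | J.Nonempty}, ∑ j ∈ J, edomStar (f j)))))
        = (V : Set (WeakDual ℝ X))) :
    (primalSol (rsum f) p).Nonempty ∧
    ∃ (K : Set X) (V : Submodule ℝ X), K.Nonempty ∧ Convex ℝ K ∧ WCompact K ∧
      FiniteDimensional ℝ V ∧ primalSol (rsum f) p = K + (V : Set X) := by
  classical
  obtain ⟨Vs, hV⟩ := hcone
  set g : X → EReal := fun x => rsum f x - (p x : EReal) with hg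
  set D' : Set (WeakDual ℝ X) := (fun q => q - p) '' RS_D f with hD'
  set cD : WeakDual ℝ X → ℝ := fun w => (econj (rsum f) (w + p)).toReal with hcD
  have hchar : ∀ (r : ℝ) (x : X), g x ≤ (r : EReal) ↔ ∀ w ∈ D', w x ≤ r + cD w := by
    intro r x
    have hbase := RS_char f p hproper hlsc hconv hfproper r x
    constructor
    · intro h
      rintro w ⟨qq, hq, rfl⟩
      have h1 := hbase.1 h qq hq
      have happ : (qq - p) x = qq x - p x := rfl
      have hback : qq - p + p = qq := sub_add_cancel qq p
      rw [happ]
      have hcd : cD (qq - p) = (econj (rsum f) qq).toReal := by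
        rw [hcD]; dsimp only; rw [hback]
      rw [hcd]
      linarith
    · intro h
      refine hbase.2 fun qq hq => ?_
      have h1 := h (qq - p) ⟨qq, hq, rfl⟩
      have happ : (qq - p) x = qq x - p x := rfl
      have hback : qq - p + p = qq := sub_add_cancel qq p
      rw [happ] at h1
      have hcd : cD (qq - p) = (econj (rsum f) qq).toReal := by
        rw [hcD]; dsimp only; rw [hback]
      rw [hcd] at h1
      linarith
  have hgbot : ∀ x, g x ≠ ⊥ := fun x => RS_sub_coe_ne_bot (hfproper.1 x) (p x)
  obtain ⟨y₀, hy₀⟩ := hfproper.2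
  have hgy₀top : g y₀ ≠ ⊤ := RS_sub_coe_ne_top hy₀ (p y₀)
  set r₀ : ℝ := (g y₀).toReal with hr₀
  have hx₀ : y₀ ∈ RS_lev g r₀ := le_of_eq (EReal.coe_toReal hgy₀top (hgbot y₀)).symm
  have hlcg : ∀ r : ℝ, IsLocCompactSet (toWeakSpace ℝ X '' RS_lev g r) := fun r =>
    RS_lc_transfer (F := rsum f) (p := p) hflc
      (fun r' => RS_lev_image_closed hchar r') r
  have hVD : closure (coneHull (convexHull ℝ D')) = (Vs : Set (WeakDual ℝ X)) := hV
  obtain ⟨xm, hmin, K, Vm, hKne, hKconv, hKcomp, hVfd, heq⟩ :=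
    RS_main hchar hgbot hx₀ hlcg hVD
  have hval : primalVal (rsum f) p = g xm := le_antisymm (iInf_le _ xm) (le_iInf hmin)
  have hsol : primalSol (rsum f) p = {x | g x ≤ g xm} := by
    ext x
    have hmem : x ∈ primalSol (rsum f) p ↔ g x = primalVal (rsum f) p := Iff.rfl
    rw [hmem, hval, mem_setOf_eq]
    exact ⟨le_of_eq, fun h => le_antisymm h (hmin x)⟩
  constructor
  · exact ⟨xm, by rw [hsol]; exact (le_rfl : g xm ≤ g xm)⟩
  · exact ⟨K, Vm, hKne, hKconv, hKcomp, hVfd, by rw [hsol, heq]⟩
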